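/- Let F ⊆ P([n]) be increasing with min over all i ∈ [n] of the influence I_i^p(F) at least c > 0, for some 0 < p < 1. Then n ≤ 1/(c² p (1−p)). -/

import Mathlib

open Finset
open scoped Classical

noncomputable def biasedMeasure (p : ℝ) (n : ℕ) (F : Finset (Finset (Fin n))) : ℝ :=
  ∑ A ∈ F, p ^ A.card * (1 - p) ^ (n - A.card)

/-- The set of i-influential elements of F. -/
noncomputable def influentialSet (n : ℕ) (F : Finset (Finset (Fin n))) (i : Fin n) :
    Finset (Finset (Fin n)) :=
  Finset.univ.filter (fun S => Xor' (S ∈ F) (symmDiff S {i} ∈ F))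

noncomputable def bw (p : ℝ) (n : ℕ) (S : Finset (Fin n)) : ℝ :=
  p ^ S.card * (1 - p) ^ (n - S.card)

-- master independence lemma
lemma master (p : ℝ) (n : ℕ) (I : Finset (Fin n)) (a b : Fin n → ℝ) :
    ∑ S : Finset (Fin n), bw p n S * ∏ i ∈ I, (if i ∈ S then a i else b i)
      = ∏ i ∈ I, (p * a i + (1 - p) * b i) := by
  have h := Finset.prod_add (fun i : Fin n => if i ∈ I then p * a i else p)
    (fun i : Fin n => if i ∈ I then (1 - p) * b i else (1 - p)) Finset.univ
  rw [Finset.powerset_univ] at h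
  have hL : ∀ S : Finset (Fin n),
      (∏ i ∈ S, (if i ∈ I then p * a i else p)) *
        ∏ i ∈ Finset.univ \ S, (if i ∈ I then (1 - p) * b i else (1 - p))
      = bw p n S * ∏ i ∈ I, (if i ∈ S then a i else b i) := by
    intro S
    rw [Finset.prod_ite, Finset.prod_ite]
    have e1 : ∏ i ∈ S.filter (· ∈ I), (p * a i) = p ^ (S.filter (· ∈ I)).card *
        ∏ i ∈ S.filter (· ∈ I), a i := by
      rw [Finset.prod_mul_distrib, Finset.prod_const]
    have e2 : ∏ i ∈ (Finset.univ \ S).filter (· ∈ I), ((1 - p) * b i)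
        = (1 - p) ^ ((Finset.univ \ S).filter (· ∈ I)).card *
          ∏ i ∈ (Finset.univ \ S).filter (· ∈ I), b i := by
      rw [Finset.prod_mul_distrib, Finset.prod_const]
    rw [e1, e2, Finset.prod_const, Finset.prod_const]
    have c1 : (S.filter (· ∈ I)).card + (S.filter (fun i => ¬ i ∈ I)).card = S.card :=
      Finset.card_filter_add_card_filter_not _
    have c2 : ((Finset.univ \ S).filter (· ∈ I)).card +
        ((Finset.univ \ S).filter (fun i => ¬ i ∈ I)).card = (Finset.univ \ S).card :=
      Finset.card_filter_add_card_filter_not _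
    have cds : (Finset.univ \ S).card = n - S.card := by
      rw [Finset.card_sdiff_of_subset (Finset.subset_univ S), Finset.card_univ, Fintype.card_fin]
    have hsplit : ∏ i ∈ I, (if i ∈ S then a i else b i)
        = (∏ i ∈ I.filter (· ∈ S), a i) * ∏ i ∈ I.filter (fun i => ¬ i ∈ S), b i := by
      rw [← Finset.prod_ite]
    have hfa : I.filter (· ∈ S) = S.filter (· ∈ I) := by
      ext x; simp [and_comm]
    have hfb : I.filter (fun i => ¬ i ∈ S) = (Finset.univ \ S).filter (· ∈ I) := by
      ext x; simp [and_comm]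
    rw [hsplit, hfa, hfb, bw, ← cds, ← c2, ← c1, pow_add, pow_add]
    ring
  calc ∑ S : Finset (Fin n), bw p n S * ∏ i ∈ I, (if i ∈ S then a i else b i)
      = ∑ S : Finset (Fin n), (∏ i ∈ S, (if i ∈ I then p * a i else p)) *
        ∏ i ∈ Finset.univ \ S, (if i ∈ I then (1 - p) * b i else (1 - p)) := by
        exact Finset.sum_congr rfl fun S _ => (hL S).symm
    _ = ∏ i ∈ Finset.univ, ((if i ∈ I then p * a i else p) + (if i ∈ I then (1-p) * b i else (1-p))) := h.symm
    _ = ∏ i ∈ I, (p * a i + (1 - p) * b i) := by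
        rw [← Finset.prod_subset (Finset.subset_univ I)
          (fun x _ hx => by simp [if_neg hx])]
        exact Finset.prod_congr rfl (fun x hx => by simp [if_pos hx])

lemma mass (p : ℝ) (n : ℕ) : ∑ S : Finset (Fin n), bw p n S = 1 := by
  have := master p n ∅ (fun _ => 1) (fun _ => 1)
  simpa using this

-- pairing decomposition over a coordinate i
lemma pairing {n : ℕ} (i : Fin n) (g : Finset (Fin n) → ℝ) :
    ∑ S : Finset (Fin n), g S
      = ∑ T ∈ (Finset.univ.erase i).powerset, (g T + g (insert i T)) := by
  have h1 : (Finset.univ : Finset (Fin n)) = insert i (Finset.univ.erase i) :=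
    (Finset.insert_erase (Finset.mem_univ i)).symm
  have h2 : (Finset.univ : Finset (Finset (Fin n)))
      = (insert i (Finset.univ.erase i)).powerset := by
    rw [← h1, Finset.powerset_univ]
  rw [show (∑ S : Finset (Fin n), g S) = ∑ S ∈ (Finset.univ : Finset (Finset (Fin n))), g S from rfl,
    h2, Finset.sum_powerset_insert (Finset.notMem_erase i _), ← Finset.sum_add_distrib]

-- basic facts for T in the powerset of univ.erase i
lemma symmdiff_insert {n : ℕ} {i : Fin n} {T : Finset (Fin n)} (hiT : i ∉ T) :
    symmDiff T {i} = insert i T := by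
  ext x
  simp only [Finset.mem_symmDiff, Finset.mem_singleton, Finset.mem_insert]
  constructor
  · rintro (⟨h1, h2⟩ | ⟨h1, h2⟩)
    · exact Or.inr h1
    · exact Or.inl h1
  · rintro (rfl | h)
    · exact Or.inr ⟨rfl, hiT⟩
    · exact Or.inl ⟨h, fun he => hiT (he ▸ h)⟩

lemma symmdiff_insert' {n : ℕ} {i : Fin n} {T : Finset (Fin n)} (hiT : i ∉ T) :
    symmDiff (insert i T) {i} = T := by
  ext x
  simp only [Finset.mem_symmDiff, Finset.mem_singleton, Finset.mem_insert]
  constructor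
  · rintro (⟨h1 | h1, h2⟩ | ⟨h1, h2⟩)
    · exact absurd h1 h2
    · exact h1
    · exact absurd (Or.inl h1) h2
  · intro h
    exact Or.inl ⟨Or.inr h, fun he => hiT (he ▸ h)⟩

noncomputable def ind (n : ℕ) (F : Finset (Finset (Fin n))) (S : Finset (Fin n)) : ℝ :=
  if S ∈ F then 1 else 0

noncomputable def hh (p : ℝ) {n : ℕ} (i : Fin n) (S : Finset (Fin n)) : ℝ :=
  if i ∈ S then 1 - p else -p

lemma cov_eq (p : ℝ) (n : ℕ) (F : Finset (Finset (Fin n)))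
    (hinc : ∀ A B : Finset (Fin n), B ∈ F → B ⊆ A → A ∈ F) (i : Fin n) :
    ∑ S : Finset (Fin n), bw p n S * (ind n F S * hh p i S)
      = p * (1 - p) * biasedMeasure p n (influentialSet n F i) := by
  have hbm : biasedMeasure p n (influentialSet n F i)
      = ∑ S : Finset (Fin n),
          (if Xor' (S ∈ F) (symmDiff S {i} ∈ F) then bw p n S else 0) := by
    rw [biasedMeasure, influentialSet, Finset.sum_filter]
    rfl
  rw [hbm, pairing i (fun S => bw p n S * (ind n F S * hh p i S)),
    pairing i (fun S => if Xor' (S ∈ F) (symmDiff S {i} ∈ F) then bw p n S else 0),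
    Finset.mul_sum]
  apply Finset.sum_congr rfl
  intro T hT
  rw [Finset.mem_powerset] at hT
  have hiT : i ∉ T := fun h => Finset.notMem_erase i _ (hT h)
  have hcard : T.card ≤ n - 1 := by
    calc T.card ≤ (Finset.univ.erase i).card := Finset.card_le_card hT
    _ = n - 1 := by rw [Finset.card_erase_of_mem (Finset.mem_univ i), Finset.card_univ,
        Fintype.card_fin]
  have hn : 0 < n := i.pos
  have hci : (insert i T).card = T.card + 1 := Finset.card_insert_of_notMem hiT
  have hnk : n - T.card = (n - (T.card + 1)) + 1 := by omega
  have hbwT : bw p n T = p ^ T.card * ((1 - p) ^ (n - (T.card + 1)) * (1 - p)) := by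
    rw [bw, hnk, pow_succ]
  have hbwiT : bw p n (insert i T) = p ^ T.card * p * (1 - p) ^ (n - (T.card + 1)) := by
    rw [bw, hci, pow_succ]
  have hsd1 : symmDiff T {i} = insert i T := symmdiff_insert hiT
  have hsd2 : symmDiff (insert i T) {i} = T := symmdiff_insert' hiT
  have hhT : hh p i T = -p := if_neg hiT
  have hhiT : hh p i (insert i T) = 1 - p := if_pos (Finset.mem_insert_self i T)
  rw [hsd1, hsd2, hhT, hhiT, hbwT, hbwiT]
  by_cases h1 : T ∈ F
  · have h2 : insert i T ∈ F := hinc _ _ h1 (Finset.subset_insert i T)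
    simp only [ind, if_pos h1, if_pos h2]
    rw [if_neg (by unfold Xor' Xor; tauto), if_neg (by unfold Xor' Xor; tauto)]
    ring
  · by_cases h2 : insert i T ∈ F
    · simp only [ind, if_neg h1, if_pos h2]
      rw [if_pos (by unfold Xor' Xor; tauto), if_pos (by unfold Xor' Xor; tauto)]
      ring
    · simp only [ind, if_neg h1, if_neg h2]
      rw [if_neg (by unfold Xor' Xor; tauto), if_neg (by unfold Xor' Xor; tauto)]
      ring

lemma hh_moment (p : ℝ) (n : ℕ) (i j : Fin n) :
    ∑ S : Finset (Fin n), bw p n S * (hh p i S * hh p j S)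
      = if i = j then p * (1 - p) else 0 := by
  by_cases hij : i = j
  · subst hij
    rw [if_pos rfl]
    have h := master p n {i} (fun _ => (1 - p) ^ 2) (fun _ => p ^ 2)
    rw [Finset.prod_singleton] at h
    calc ∑ S : Finset (Fin n), bw p n S * (hh p i S * hh p i S)
        = ∑ S : Finset (Fin n), bw p n S *
            ∏ k ∈ ({i} : Finset (Fin n)), (if k ∈ S then (1 - p) ^ 2 else p ^ 2) := by
          apply Finset.sum_congr rfl
          intro S _
          rw [Finset.prod_singleton, hh]
          by_cases hiS : i ∈ S
          · rw [if_pos hiS, if_pos hiS]; ring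
          · rw [if_neg hiS, if_neg hiS]; ring
      _ = p * (1 - p) ^ 2 + (1 - p) * p ^ 2 := h
      _ = p * (1 - p) := by ring
  · rw [if_neg hij]
    have h := master p n {i, j} (fun _ => 1 - p) (fun _ => -p)
    simp only [Finset.prod_pair hij] at h
    calc ∑ S : Finset (Fin n), bw p n S * (hh p i S * hh p j S)
        = ∑ S : Finset (Fin n), bw p n S *
            ((if i ∈ S then 1 - p else -p) * (if j ∈ S then 1 - p else -p)) := rfl
      _ = (p * (1 - p) + (1 - p) * -p) * (p * (1 - p) + (1 - p) * -p) := h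
      _ = 0 := by ring

lemma csw {ι : Type*} [Fintype ι] (w u v : ι → ℝ) (hw : ∀ s, 0 ≤ w s) :
    (∑ s : ι, w s * (u s * v s)) ^ 2
      ≤ (∑ s : ι, w s * u s ^ 2) * ∑ s : ι, w s * v s ^ 2 := by
  have h := Finset.sum_mul_sq_le_sq_mul_sq Finset.univ
    (fun s => Real.sqrt (w s) * u s) (fun s => Real.sqrt (w s) * v s)
  have e1 : ∀ s : ι, (Real.sqrt (w s) * u s) * (Real.sqrt (w s) * v s)
      = w s * (u s * v s) := by
    intro s
    have hs := Real.mul_self_sqrt (hw s)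
    linear_combination (u s * v s) * hs
  have e2 : ∀ s : ι, (Real.sqrt (w s) * u s) ^ 2 = w s * u s ^ 2 := by
    intro s
    rw [mul_pow, Real.sq_sqrt (hw s)]
  have e3 : ∀ s : ι, (Real.sqrt (w s) * v s) ^ 2 = w s * v s ^ 2 := by
    intro s
    rw [mul_pow, Real.sq_sqrt (hw s)]
  calc (∑ s : ι, w s * (u s * v s)) ^ 2
      = (∑ s : ι, (Real.sqrt (w s) * u s) * (Real.sqrt (w s) * v s)) ^ 2 := by
        rw [Finset.sum_congr rfl (fun s _ => (e1 s))]
    _ ≤ (∑ s : ι, (Real.sqrt (w s) * u s) ^ 2) * ∑ s : ι, (Real.sqrt (w s) * v s) ^ 2 := h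
    _ = (∑ s : ι, w s * u s ^ 2) * ∑ s : ι, w s * v s ^ 2 := by
        rw [Finset.sum_congr rfl (fun s _ => (e2 s)), Finset.sum_congr rfl (fun s _ => (e3 s))]

theorem large_influences_bounded_n (n : ℕ) (p c : ℝ) (hp : 0 < p) (hp1 : p < 1)
    (hc : 0 < c) (F : Finset (Finset (Fin n)))
    (hinc : ∀ A B : Finset (Fin n), B ∈ F → B ⊆ A → A ∈ F)
    (hmin : ∀ i : Fin n, c ≤ biasedMeasure p n (influentialSet n F i)) :
    (n : ℝ) ≤ 1 / (c ^ 2 * p * (1 - p)) := by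
  have hq : 0 < 1 - p := by linarith
  have hpq : 0 < p * (1 - p) := mul_pos hp hq
  rcases Nat.eq_zero_or_pos n with hn | hn
  · subst hn
    simp only [Nat.cast_zero]
    positivity
  -- the covariances
  set a : Fin n → ℝ := fun i => ∑ S : Finset (Fin n), bw p n S * (ind n F S * hh p i S)
    with ha
  set V : ℝ := ∑ i : Fin n, a i ^ 2 with hV
  have hbw : ∀ S : Finset (Fin n), 0 ≤ bw p n S := by
    intro S
    unfold bw
    positivity
  have hai : ∀ i : Fin n, p * (1 - p) * c ≤ a i := by
    intro i
    rw [ha]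
    simp only
    rw [cov_eq p n F hinc i]
    have := hmin i
    nlinarith [hmin i]
  -- lower bound on V
  have hVlow : (n : ℝ) * (p * (1 - p) * c) ^ 2 ≤ V := by
    rw [hV]
    calc (n : ℝ) * (p * (1 - p) * c) ^ 2
        = ∑ _i : Fin n, (p * (1 - p) * c) ^ 2 := by
          rw [Finset.sum_const, Finset.card_univ, Fintype.card_fin, nsmul_eq_mul]
      _ ≤ ∑ i : Fin n, a i ^ 2 := by
          apply Finset.sum_le_sum
          intro i _
          have h1 := hai i
          have h2 : 0 ≤ p * (1 - p) * c := by positivity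
          exact pow_le_pow_left₀ h2 h1 2
  -- E[f g] = V
  have hEfg : ∑ S : Finset (Fin n), bw p n S *
      (ind n F S * ∑ i : Fin n, a i * hh p i S) = V := by
    calc ∑ S : Finset (Fin n), bw p n S * (ind n F S * ∑ i : Fin n, a i * hh p i S)
        = ∑ S : Finset (Fin n), ∑ i : Fin n, a i * (bw p n S * (ind n F S * hh p i S)) := by
          apply Finset.sum_congr rfl
          intro S _
          rw [Finset.mul_sum, Finset.mul_sum]
          apply Finset.sum_congr rfl
          intro i _
          ring
      _ = ∑ i : Fin n, ∑ S : Finset (Fin n), a i * (bw p n S * (ind n F S * hh p i S)) :=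
          Finset.sum_comm
      _ = ∑ i : Fin n, a i * a i := by
          apply Finset.sum_congr rfl
          intro i _
          rw [← Finset.mul_sum, ha]
      _ = V := by
          rw [hV]
          exact Finset.sum_congr rfl fun i _ => (sq (a i)).symm
  -- E[g^2] = p(1-p) V
  have hEg2 : ∑ S : Finset (Fin n), bw p n S * (∑ i : Fin n, a i * hh p i S) ^ 2
      = p * (1 - p) * V := by
    calc ∑ S : Finset (Fin n), bw p n S * (∑ i : Fin n, a i * hh p i S) ^ 2
        = ∑ S : Finset (Fin n), ∑ i : Fin n, ∑ j : Fin n,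
            a i * a j * (bw p n S * (hh p i S * hh p j S)) := by
          apply Finset.sum_congr rfl
          intro S _
          rw [sq, Finset.sum_mul_sum, Finset.mul_sum]
          apply Finset.sum_congr rfl
          intro i _
          rw [Finset.mul_sum]
          apply Finset.sum_congr rfl
          intro j _
          ring
      _ = ∑ i : Fin n, ∑ j : Fin n, a i * a j *
            ∑ S : Finset (Fin n), bw p n S * (hh p i S * hh p j S) := by
          rw [Finset.sum_comm]
          apply Finset.sum_congr rfl
          intro i _
          rw [Finset.sum_comm]
          apply Finset.sum_congr rfl
          intro j _
          exact (Finset.mul_sum _ _ _).symm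
      _ = ∑ i : Fin n, ∑ j : Fin n, a i * a j * (if i = j then p * (1 - p) else 0) := by
          apply Finset.sum_congr rfl
          intro i _
          apply Finset.sum_congr rfl
          intro j _
          rw [hh_moment]
      _ = ∑ i : Fin n, a i * a i * (p * (1 - p)) := by
          apply Finset.sum_congr rfl
          intro i _
          rw [Finset.sum_eq_single i]
          · rw [if_pos rfl]
          · intro j _ hj
            rw [if_neg (fun h => hj h.symm), mul_zero]
          · intro h
            exact absurd (Finset.mem_univ i) h
      _ = p * (1 - p) * V := by
          rw [hV, Finset.mul_sum]
          apply Finset.sum_congr rfl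
          intro i _
          ring
  -- E[f^2] ≤ 1
  have hEf2 : ∑ S : Finset (Fin n), bw p n S * (ind n F S) ^ 2 ≤ 1 := by
    calc ∑ S : Finset (Fin n), bw p n S * (ind n F S) ^ 2
        ≤ ∑ S : Finset (Fin n), bw p n S := by
          apply Finset.sum_le_sum
          intro S _
          have : (ind n F S) ^ 2 ≤ 1 := by
            unfold ind
            by_cases h : S ∈ F <;> simp [h]
          nlinarith [hbw S]
      _ = 1 := mass p n
  -- Cauchy–Schwarz
  have hCS := csw (bw p n) (ind n F) (fun S => ∑ i : Fin n, a i * hh p i S) hbw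
  simp only [hEfg, hEg2] at hCS
  have hV0 : 0 < V := by
    have : (0:ℝ) < (n : ℝ) * (p * (1 - p) * c) ^ 2 := by
      have hn' : (0:ℝ) < (n:ℝ) := Nat.cast_pos.mpr hn
      positivity
    linarith
  have hEg2nn : 0 ≤ p * (1 - p) * V := by positivity
  have hVle : V ≤ p * (1 - p) := by
    have h1 : V ^ 2 ≤ p * (1 - p) * V := by
      calc V ^ 2 ≤ (∑ S : Finset (Fin n), bw p n S * (ind n F S) ^ 2)
          * (p * (1 - p) * V) := hCS
        _ ≤ 1 * (p * (1 - p) * V) := by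
            apply mul_le_mul_of_nonneg_right hEf2 hEg2nn
        _ = p * (1 - p) * V := one_mul _
    nlinarith
  rw [le_div_iff₀ (by positivity)]
  nlinarith [hVlow, hVle, hpq, mul_pos hpq hpq]
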